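/- Let T be a bounded linear operator on a complex Hilbert space H and x ∈ H a unit vector. Then |⟨Tx,x⟩|² ≤ ⟨|T|x,x⟩ ⟨|T*|x,x⟩, where |T| = (T*T)^{1/2} and |T*| = (TT*)^{1/2}. -/

import Mathlib

set_option synthInstance.maxHeartbeats 1000000
set_option maxHeartbeats 1000000

open scoped InnerProductSpace

noncomputable def opAbs {H : Type*} [NormedAddCommGroup H] [InnerProductSpace ℂ H]
    [CompleteSpace H] (T : H →L[ℂ] H) : H →L[ℂ] H :=
  CFC.sqrt ((ContinuousLinearMap.adjoint T) * T)

noncomputable def numRadius {H : Type*} [NormedAddCommGroup H] [InnerProductSpace ℂ H]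
    (T : H →L[ℂ] H) : ℝ :=
  ⨆ x : {y : H // ‖y‖ = 1}, ‖⟪T (x : H), (x : H)⟫_ℂ‖

open scoped NNReal
open ContinuousLinearMap

section Aux

variable {H : Type*} [NormedAddCommGroup H] [InnerProductSpace ℂ H] [CompleteSpace H]

lemma aux_pw1 (ε s : ℝ≥0) (hε : 0 < ε) : s * (NNReal.sqrt (s+ε))⁻¹ ≤ NNReal.sqrt s := by
  have h0 : (0:ℝ≥0) < NNReal.sqrt (s+ε) := by
    rw [NNReal.sqrt_pos]; positivity
  rw [mul_inv_le_iff₀' h0, ← NNReal.sqrt_mul]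
  have : s = NNReal.sqrt (s * s) := by rw [NNReal.sqrt_mul_self]
  nth_rewrite 1 [this]
  rw [NNReal.sqrt_le_sqrt]
  exact mul_le_mul_left le_self_add s

lemma aux_pw2 (ε s : ℝ≥0) : NNReal.sqrt (s+ε) ≤ NNReal.sqrt s + NNReal.sqrt ε := by
  rw [NNReal.sqrt_le_iff_le_sq]
  calc s + ε ≤ s + ε + NNReal.sqrt s * NNReal.sqrt ε * 2 := le_add_of_nonneg_right (by positivity)
  _ = NNReal.sqrt s ^2 + NNReal.sqrt s * NNReal.sqrt ε * 2 + NNReal.sqrt ε ^2 := by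
      rw [NNReal.sq_sqrt, NNReal.sq_sqrt]; ring
  _ = (NNReal.sqrt s + NNReal.sqrt ε)^2 := by ring

lemma aux_inner_nonneg {G : H →L[ℂ] H} (hG : 0 ≤ G) (x : H) : 0 ≤ (⟪G x, x⟫_ℂ).re := by
  rw [ContinuousLinearMap.nonneg_iff_isPositive] at hG
  simpa [ContinuousLinearMap.reApplyInnerSelf] using hG.2 x

lemma aux_inner_mono {G1 G2 : H →L[ℂ] H} (h : G1 ≤ G2) (x : H) :
    (⟪G1 x, x⟫_ℂ).re ≤ (⟪G2 x, x⟫_ℂ).re := by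
  rw [ContinuousLinearMap.le_def] at h
  have := h.2 x
  simp only [ContinuousLinearMap.reApplyInnerSelf, ContinuousLinearMap.sub_apply,
    inner_sub_left, map_sub, RCLike.re_to_complex] at this
  linarith

lemma aux_key (T : H →L[ℂ] H) (ε : ℝ≥0) (hε : 0 < ε) (x : H) (hx : ‖x‖ = 1) :
    ‖⟪T x, x⟫_ℂ‖ ^ 2 ≤
      ((⟪(opAbs T) x, x⟫_ℂ).re + (NNReal.sqrt ε : ℝ)) *
        (⟪(opAbs (adjoint T)) x, x⟫_ℂ).re := by
  set S := adjoint T with hS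
  set a1 : H →L[ℂ] H := S * T with ha1
  set a2 : H →L[ℂ] H := T * S with ha2
  have hTstar : star T = S := star_eq_adjoint T
  have hSstar : star S = T := by rw [star_eq_adjoint, hS, adjoint_adjoint]
  have h1 : (0:H →L[ℂ] H) ≤ a1 := by rw [ha1, ← hTstar]; exact star_mul_self_nonneg T
  have h2 : (0:H →L[ℂ] H) ≤ a2 := by rw [ha2, ← hSstar]; exact star_mul_self_nonneg S
  -- the functions
  set c : ℝ≥0 → ℝ≥0 := fun s => NNReal.sqrt (NNReal.sqrt (s+ε)) with hcdef
  set d : ℝ≥0 → ℝ≥0 := fun s => (c s)⁻¹ with hddef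
  set e : ℝ≥0 → ℝ≥0 := fun s => (NNReal.sqrt (s+ε))⁻¹ with hedef
  set p : ℝ≥0 → ℝ≥0 := fun s => (s+ε)⁻¹ with hpdef
  have hcpos : ∀ s, 0 < c s := fun s => by
    rw [hcdef]; dsimp only; rw [NNReal.sqrt_pos, NNReal.sqrt_pos]; positivity
  have hepos : ∀ s, 0 < e s := fun s => by
    rw [hedef]; dsimp only
    rw [inv_pos, NNReal.sqrt_pos]; positivity
  have hc : Continuous c :=
    NNReal.continuous_sqrt.comp (NNReal.continuous_sqrt.comp (continuous_id.add continuous_const))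
  have hd : Continuous d := hc.inv₀ fun s => (hcpos s).ne'
  have he : Continuous e :=
    (NNReal.continuous_sqrt.comp (continuous_id.add continuous_const)).inv₀
      fun s => by
        have h0 : (0:ℝ≥0) < NNReal.sqrt (s+ε) := by rw [NNReal.sqrt_pos]; positivity
        simpa using h0.ne'
  have hp : Continuous p := (continuous_id.add continuous_const).inv₀ fun s => ne_of_gt (add_pos_of_nonneg_of_pos zero_le hε)
  set C : H →L[ℂ] H := cfc c a1 with hCdef
  set D : H →L[ℂ] H := cfc d a1 with hDdef
  set E : H →L[ℂ] H := cfc e a1 with hEdef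
  set P : H →L[ℂ] H := cfc p a1 with hPdef
  set Q : H →L[ℂ] H := cfc p a2 with hQdef
  have hC0 : (0:H →L[ℂ] H) ≤ C := cfc_nonneg fun s _ => zero_le
  have hD0 : (0:H →L[ℂ] H) ≤ D := cfc_nonneg fun s _ => zero_le
  have hCsa : IsSelfAdjoint C := IsSelfAdjoint.of_nonneg hC0
  have hDsa : IsSelfAdjoint D := IsSelfAdjoint.of_nonneg hD0
  have hCadj : adjoint C = C := by rw [← star_eq_adjoint]; exact hCsa
  have hDadj : adjoint D = D := by rw [← star_eq_adjoint]; exact hDsa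
  -- C * D = 1
  have hCD : C * D = 1 := by
    rw [hCdef, hDdef, ← cfc_mul c d a1 hc.continuousOn hd.continuousOn,
      ← cfc_one (R := ℝ≥0) a1]
    exact cfc_congr fun s _ => mul_inv_cancel₀ (hcpos s).ne'
  -- D * D = E
  have hDD : D * D = E := by
    rw [hDdef, hEdef, ← cfc_mul d d a1 hd.continuousOn hd.continuousOn]
    refine cfc_congr fun s _ => ?_
    rw [hddef]; dsimp only
    rw [← mul_inv, hcdef]; dsimp only
    rw [NNReal.mul_self_sqrt]
  -- the eps multiple of the identity
  set I : H →L[ℂ] H := algebraMap ℝ≥0 (H →L[ℂ] H) ε with hIdef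
  have ha1I : a1 + I = cfc (fun s : ℝ≥0 => s + ε) a1 := by
    rw [cfc_add a1 (fun s => s) (fun _ => ε), cfc_id' ℝ≥0 a1, cfc_const ε a1]
  have ha2I : a2 + I = cfc (fun s : ℝ≥0 => s + ε) a2 := by
    rw [cfc_add a2 (fun s => s) (fun _ => ε), cfc_id' ℝ≥0 a2, cfc_const ε a2]
  -- P inverts a1 + I, Q inverts a2 + I
  have hP1 : (a1 + I) * P = 1 := by
    rw [ha1I, hPdef, ← cfc_mul _ p a1 (by fun_prop) hp.continuousOn,
      ← cfc_one (R := ℝ≥0) a1]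
    exact cfc_congr fun s _ => mul_inv_cancel₀ (by positivity)
  have hP2 : P * (a1 + I) = 1 := by
    rw [ha1I, hPdef, ← cfc_mul p _ a1 hp.continuousOn (by fun_prop),
      ← cfc_one (R := ℝ≥0) a1]
    exact cfc_congr fun s _ => inv_mul_cancel₀ (by positivity)
  have hQ1 : Q * (a2 + I) = 1 := by
    rw [ha2I, hQdef, ← cfc_mul p _ a2 hp.continuousOn (by fun_prop),
      ← cfc_one (R := ℝ≥0) a2]
    exact cfc_congr fun s _ => inv_mul_cancel₀ (by positivity)
  -- intertwining
  have hcomm1 : a2 * T = T * a1 := by rw [ha1, ha2, mul_assoc]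
  have hcommI : (a2 + I) * T = T * (a1 + I) := by
    rw [add_mul, mul_add, hcomm1, hIdef, Algebra.commutes]
  have hTP : T * P = Q * T := by
    calc T * P = (Q * (a2 + I)) * (T * P) := by rw [hQ1, one_mul]
    _ = Q * (((a2 + I) * T) * P) := by noncomm_ring
    _ = Q * ((T * (a1 + I)) * P) := by rw [hcommI]
    _ = Q * (T * ((a1 + I) * P)) := by noncomm_ring
    _ = Q * T := by rw [hP1, mul_one]
  have hee : ∀ s, e s * e s = p s := fun s => by
    rw [hedef, hpdef]; dsimp only
    rw [← mul_inv, NNReal.mul_self_sqrt]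
  -- the operator X and its identification
  set X : H →L[ℂ] H := T * E * S with hXdef
  have hX0 : (0:H →L[ℂ] H) ≤ X := by
    have : X = (T * D) * star (T * D) := by
      rw [star_mul, hTstar, (hDsa : star D = D), hXdef, ← hDD]
      noncomm_ring
    rw [this]
    exact mul_star_self_nonneg _
  -- E * a1 * E = a1 * P
  have hEaE : E * a1 * E = a1 * P := by
    have k1 : cfc (fun s : ℝ≥0 => e s * s * e s) a1 = E * a1 * E := by
      rw [cfc_mul (fun s : ℝ≥0 => e s * s) e a1 (he.mul continuous_id).continuousOn
          he.continuousOn,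
        cfc_mul e (fun s => s) a1 he.continuousOn (by fun_prop), cfc_id' ℝ≥0 a1, ← hEdef]
    have k2 : cfc (fun s : ℝ≥0 => s * p s) a1 = a1 * P := by
      rw [cfc_mul (fun s : ℝ≥0 => s) p a1 (by fun_prop) hp.continuousOn, cfc_id' ℝ≥0 a1,
        ← hPdef]
    rw [← k1, ← k2]
    refine cfc_congr fun s _ => ?_
    rw [show e s * s * e s = s * (e s * e s) by ring, hee s]
  -- X * X = a2 * Q * a2
  have hXX : X * X = a2 * Q * a2 := by
    calc X * X = T * E * (S * T) * E * S := by rw [hXdef]; noncomm_ring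
    _ = T * (E * a1 * E) * S := by rw [← ha1]; noncomm_ring
    _ = (T * a1) * (P * S) := by rw [hEaE]; noncomm_ring
    _ = a2 * ((T * P) * S) := by rw [← hcomm1]; noncomm_ring
    _ = a2 * Q * (T * S) := by rw [hTP]; noncomm_ring
    _ = a2 * Q * a2 := by rw [← ha2]
  -- a2 * Q * a2 as a cfc
  have hZ : cfc (fun s : ℝ≥0 => s * p s * s) a2 = a2 * Q * a2 := by
    rw [cfc_mul (fun s : ℝ≥0 => s * p s) (fun s => s) a2
        (continuous_id.mul hp).continuousOn (by fun_prop),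
      cfc_mul (fun s : ℝ≥0 => s) p a2 (by fun_prop) hp.continuousOn, cfc_id' ℝ≥0 a2,
      ← hQdef]
  -- Y and its square
  set Y : H →L[ℂ] H := cfc (fun s : ℝ≥0 => s * e s) a2 with hYdef
  have hY0 : (0:H →L[ℂ] H) ≤ Y := cfc_nonneg fun s _ => zero_le
  have hYY : Y * Y = cfc (fun s : ℝ≥0 => s * p s * s) a2 := by
    rw [hYdef, ← cfc_mul (fun s : ℝ≥0 => s * e s) (fun s : ℝ≥0 => s * e s) a2
      (continuous_id.mul he).continuousOn (continuous_id.mul he).continuousOn]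
    refine cfc_congr fun s _ => ?_
    rw [mul_mul_mul_comm, hee s]
    ring
  -- X = Y by uniqueness of the square root
  have hXY : X = Y := by
    have hx1 : CFC.sqrt (cfc (fun s : ℝ≥0 => s * p s * s) a2) = X :=
      CFC.sqrt_unique (by rw [hXX, hZ]) hX0
    have hy1 : CFC.sqrt (cfc (fun s : ℝ≥0 => s * p s * s) a2) = Y :=
      CFC.sqrt_unique hYY hY0
    rw [← hx1, hy1]
  -- C * C and its upper bound
  have hCC : C * C = cfc (fun s : ℝ≥0 => NNReal.sqrt (s+ε)) a1 := by
    rw [hCdef, ← cfc_mul c c a1 hc.continuousOn hc.continuousOn]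
    refine cfc_congr fun s _ => ?_
    rw [hcdef]; dsimp only; rw [NNReal.mul_self_sqrt]
  have hCle : C * C ≤ opAbs T + algebraMap ℝ≥0 (H →L[ℂ] H) (NNReal.sqrt ε) := by
    have habs : opAbs T = cfc NNReal.sqrt a1 := by
      have h0 : opAbs T = CFC.sqrt a1 := rfl
      rw [h0, CFC.sqrt, cfcₙ_eq_cfc (R := ℝ≥0) NNReal.continuous_sqrt.continuousOn (by simp)]
    have hsum : cfc (fun s : ℝ≥0 => NNReal.sqrt s + NNReal.sqrt ε) a1
        = opAbs T + algebraMap ℝ≥0 (H →L[ℂ] H) (NNReal.sqrt ε) := by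
      rw [cfc_add a1 (fun s => NNReal.sqrt s) (fun _ => NNReal.sqrt ε)
          NNReal.continuous_sqrt.continuousOn continuousOn_const,
        cfc_const (NNReal.sqrt ε) a1, habs]
    rw [hCC, ← hsum]
    exact cfc_mono (fun s _ => aux_pw2 ε s)
      (NNReal.continuous_sqrt.comp (continuous_id.add continuous_const)).continuousOn
      (NNReal.continuous_sqrt.add continuous_const).continuousOn
  -- Y is dominated by |T*|
  have hYle : Y ≤ opAbs S := by
    have habs2 : opAbs S = cfc NNReal.sqrt a2 := by
      have h0 : opAbs S = CFC.sqrt (adjoint S * S) := rfl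
      rw [h0, hS, adjoint_adjoint, ← hS, ← ha2, CFC.sqrt,
        cfcₙ_eq_cfc (R := ℝ≥0) NNReal.continuous_sqrt.continuousOn (by simp)]
    rw [hYdef, habs2]
    refine cfc_mono (fun s _ => ?_) (continuous_id.mul he).continuousOn
      NNReal.continuous_sqrt.continuousOn
    rw [hedef]; dsimp only
    exact aux_pw1 ε s hε
  -- symmetric operators
  have hCsym := (ContinuousLinearMap.isSelfAdjoint_iff_isSymmetric).mp hCsa
  have hDsym := (ContinuousLinearMap.isSelfAdjoint_iff_isSymmetric).mp hDsa
  -- the inner product identity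
  have hTx : ⟪T x, x⟫_ℂ = ⟪C x, (D * S) x⟫_ℂ := by
    have h' : S x = C ((D * S) x) := by
      have h'' := congrArg (fun G : H →L[ℂ] H => G (S x)) hCD
      simpa [ContinuousLinearMap.mul_apply] using h''.symm
    calc ⟪T x, x⟫_ℂ = ⟪x, S x⟫_ℂ := by rw [hS, adjoint_inner_right]
    _ = ⟪x, C ((D * S) x)⟫_ℂ := by rw [← h']
    _ = ⟪C x, (D * S) x⟫_ℂ := (hCsym x ((D * S) x)).symm
  have hnn : ‖⟪T x, x⟫_ℂ‖ ≤ ‖C x‖ * ‖(D * S) x‖ := by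
    rw [hTx]; exact norm_inner_le_norm _ _
  have hCx : (⟪(C * C) x, x⟫_ℂ).re = ‖C x‖^2 := by
    rw [ContinuousLinearMap.mul_apply]
    have h' := hCsym (C x) x
    simp only [ContinuousLinearMap.coe_coe] at h'
    rw [h']
    simpa using inner_self_eq_norm_sq (𝕜 := ℂ) _
  have hDx : (⟪X x, x⟫_ℂ).re = ‖(D * S) x‖^2 := by
    have hadjS : adjoint S = T := by rw [hS, adjoint_adjoint]
    have e1 : ⟪X x, x⟫_ℂ = ⟪D (D (S x)), S x⟫_ℂ := by
      rw [hXdef, ← hDD, ← hadjS]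
      simp only [ContinuousLinearMap.mul_apply]
      rw [adjoint_inner_left]
    have h' := hDsym (D (S x)) (S x)
    simp only [ContinuousLinearMap.coe_coe] at h'
    rw [e1, h']
    simp only [ContinuousLinearMap.mul_apply]
    simpa using inner_self_eq_norm_sq (𝕜 := ℂ) _
  -- main Cauchy-Schwarz estimate
  have main : ‖⟪T x, x⟫_ℂ‖^2 ≤ (⟪(C * C) x, x⟫_ℂ).re * (⟪X x, x⟫_ℂ).re := by
    rw [hCx, hDx]
    calc ‖⟪T x, x⟫_ℂ‖^2 ≤ (‖C x‖ * ‖(D * S) x‖)^2 :=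
      pow_le_pow_left₀ (norm_nonneg _) hnn 2
    _ = ‖C x‖^2 * ‖(D * S) x‖^2 := by ring
  -- translate the operator bounds
  have halgre : (⟪(algebraMap ℝ≥0 (H →L[ℂ] H) (NNReal.sqrt ε)) x, x⟫_ℂ).re
      = (NNReal.sqrt ε : ℝ) := by
    rw [Algebra.algebraMap_eq_smul_one]
    simp only [ContinuousLinearMap.smul_apply, ContinuousLinearMap.one_apply]
    rw [NNReal.smul_def, RCLike.real_smul_eq_coe_smul (K := ℂ), inner_smul_real_left]
    have h1' : (⟪x, x⟫_ℂ) = 1 := by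
      rw [inner_self_eq_norm_sq_to_K, hx]; norm_num
    rw [h1']
    simp [Complex.real_smul]
  have h5 : (⟪(C * C) x, x⟫_ℂ).re ≤ (⟪(opAbs T) x, x⟫_ℂ).re + (NNReal.sqrt ε : ℝ) := by
    have h5' := aux_inner_mono hCle x
    simpa [ContinuousLinearMap.add_apply, inner_add_left, halgre] using h5'
  have h6 : (⟪X x, x⟫_ℂ).re ≤ (⟪(opAbs S) x, x⟫_ℂ).re := aux_inner_mono (hXY ▸ hYle) x
  have h7 : 0 ≤ (⟪X x, x⟫_ℂ).re := by rw [hDx]; positivity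
  have h8 : 0 ≤ (⟪(C * C) x, x⟫_ℂ).re := by rw [hCx]; positivity
  calc ‖⟪T x, x⟫_ℂ‖^2 ≤ (⟪(C * C) x, x⟫_ℂ).re * (⟪X x, x⟫_ℂ).re := main
  _ ≤ ((⟪(opAbs T) x, x⟫_ℂ).re + (NNReal.sqrt ε : ℝ)) * (⟪(opAbs S) x, x⟫_ℂ).re :=
      mul_le_mul h5 h6 h7 (le_trans h8 h5)


end Aux

theorem stmt_7 {H : Type*} [NormedAddCommGroup H] [InnerProductSpace ℂ H] [CompleteSpace H]
    (T : H →L[ℂ] H) (x : H) (hx : ‖x‖ = 1) :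
    ‖⟪T x, x⟫_ℂ‖ ^ 2 ≤
      (⟪(opAbs T) x, x⟫_ℂ).re * (⟪(opAbs (ContinuousLinearMap.adjoint T)) x, x⟫_ℂ).re := by
  set A0 : ℝ := (⟪(opAbs T) x, x⟫_ℂ).re with hA0
  set B0 : ℝ := (⟪(opAbs (ContinuousLinearMap.adjoint T)) x, x⟫_ℂ).re with hB0
  have hB0nn : 0 ≤ B0 := aux_inner_nonneg (CFC.sqrt_nonneg _) x
  refine le_of_forall_pos_le_add fun δ hδ => ?_
  set r : ℝ := δ / (B0 + 1) with hr
  have hrpos : 0 < r := by positivity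
  set ε : ℝ≥0 := (Real.toNNReal r)^2 with hεdef
  have hε : 0 < ε := pow_pos (Real.toNNReal_pos.mpr hrpos) 2
  have hsq : (NNReal.sqrt ε : ℝ) = r := by
    rw [hεdef, NNReal.sqrt_sq]
    exact Real.coe_toNNReal r hrpos.le
  have h := aux_key T ε hε x hx
  calc ‖⟪T x, x⟫_ℂ‖ ^ 2 ≤ (A0 + (NNReal.sqrt ε : ℝ)) * B0 := h
  _ = A0 * B0 + r * B0 := by rw [hsq]; ring
  _ ≤ A0 * B0 + δ := by
      have hrB : r * B0 ≤ δ := by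
        rw [hr, div_mul_eq_mul_div, div_le_iff₀ (by positivity)]
        nlinarith
      linarith
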